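/- For ω = 2, γ = 1, ε = 2√3, the characteristic polynomial of A(ω,ε,γ) equals (λ² + 2)², so the eigenvalues are i√2 and -i√2, each with algebraic multiplicity 2; moreover at these parameter values A is not diagonalizable over ℂ (each eigenvalue has geometric multiplicity 1). -/

import Mathlib

set_option maxHeartbeats 1000000


open Matrix Polynomial

/-- The coefficient matrix `A(ω,ε,γ)` of the coupled-oscillator system of Eq. (27)–(28),
viewed as a complex matrix with real entries. -/
noncomputable def Am (om ep ga : ℝ) : Matrix (Fin 4) (Fin 4) ℂ :=
  !![0, 0, 1, 0;
     0, 0, 0, 1;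
     -((om : ℂ) ^ 2), -(ep : ℂ), -2 * (ga : ℂ), 0;
     -(ep : ℂ), -((om : ℂ) ^ 2), 0, 2 * (ga : ℂ)]

lemma Am_charpoly' : (Am 2 (2 * Real.sqrt 3) 1).charpoly = (X ^ 2 + C 2) ^ 2 := by
  have h12 : (C ((2 * Real.sqrt 3 : ℝ) : ℂ)) * (C ((2 * Real.sqrt 3 : ℝ) : ℂ)) = C 12 := by
    rw [← _root_.map_mul, ← Complex.ofReal_mul]
    norm_num [mul_mul_mul_comm, Real.mul_self_sqrt (by norm_num : (0:ℝ) ≤ 3)]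
  have hch : (Am 2 (2 * Real.sqrt 3) 1).charmatrix =
      !![X, 0, -1, 0;
         0, X, 0, -1;
         C 4, C ((2 * Real.sqrt 3 : ℝ) : ℂ), X + 2, 0;
         C ((2 * Real.sqrt 3 : ℝ) : ℂ), C 4, 0, X - 2] := by
    ext i j
    fin_cases i <;> fin_cases j <;>
      simp [Am, charmatrix_apply, Matrix.diagonal, ← map_pow, map_ofNat] <;>
      norm_num [← _root_.map_pow, map_ofNat]
  rw [Matrix.charpoly, hch]
  simp [Matrix.det_succ_row_zero, Fin.sum_univ_succ, Fin.succAbove]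
  ring_nf
  rw [show C ((2 * Real.sqrt 3 : ℝ) : ℂ) = C 2 * C ((Real.sqrt 3 : ℝ) : ℂ) by
    push_cast; rw [_root_.map_mul]] at h12
  have h12' : (C 2) ^ 2 * (C ((Real.sqrt 3 : ℝ) : ℂ)) ^ 2 = C 12 := by rw [← h12]; ring
  rw [h12']
  simp [map_ofNat]
  ring

lemma charpoly_eval' (M : Matrix (Fin 4) (Fin 4) ℂ) (μ : ℂ) :
    M.charpoly.eval μ = (Matrix.scalar (Fin 4) μ - M).det := by
  rw [Matrix.charpoly, ← Polynomial.coe_evalRingHom, RingHom.map_det]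
  congr 1
  ext i j
  rcases eq_or_ne i j with rfl | h
  · simp [Matrix.scalar_apply]
  · simp [charmatrix_apply_ne _ _ _ h, Matrix.scalar_apply, Matrix.diagonal_apply_ne _ h]

lemma mem_spectrum_iff' (M : Matrix (Fin 4) (Fin 4) ℂ) (μ : ℂ) :
    μ ∈ spectrum ℂ M ↔ M.charpoly.eval μ = 0 := by
  have halg : (algebraMap ℂ (Matrix (Fin 4) (Fin 4) ℂ)) μ = Matrix.scalar (Fin 4) μ := by
    ext i j
    simp [Matrix.algebraMap_eq_diagonal, Matrix.scalar_apply, Matrix.diagonal_apply]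
  rw [spectrum.mem_iff, charpoly_eval', halg]
  constructor
  · intro h
    by_contra hne
    exact h ((Matrix.isUnit_iff_isUnit_det _).mpr (isUnit_iff_ne_zero.mpr hne))
  · intro h hU
    exact (isUnit_iff_ne_zero.mp ((Matrix.isUnit_iff_isUnit_det _).mp hU)) h

lemma sq_I_sqrt2 : (Complex.I * (Real.sqrt 2 : ℂ)) ^ 2 = -2 := by
  rw [mul_pow, Complex.I_sq, ← Complex.ofReal_pow,
    Real.sq_sqrt (by norm_num : (0:ℝ) ≤ 2)]
  norm_num

lemma Am_spectrum : spectrum ℂ (Am 2 (2 * Real.sqrt 3) 1)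
    = {Complex.I * (Real.sqrt 2 : ℂ), -(Complex.I * (Real.sqrt 2 : ℂ))} := by
  set c := Complex.I * (Real.sqrt 2 : ℂ) with hc
  ext μ
  rw [mem_spectrum_iff', Am_charpoly']
  simp only [eval_pow, eval_add, eval_X, eval_C,
    pow_eq_zero_iff (two_ne_zero), Set.mem_insert_iff, Set.mem_singleton_iff]
  have hfac : μ ^ 2 + 2 = (μ - c) * (μ + c) := by
    have := sq_I_sqrt2
    rw [← hc] at this
    linear_combination this
  rw [hfac, mul_eq_zero, sub_eq_zero, add_eq_zero_iff_eq_neg]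

/-- At `ω = 2`, `γ = 1`, `ε = 2√3`, the characteristic polynomial of `A(ω,ε,γ)` equals
`(λ² + 2)²`, so the eigenvalues are `±i√2`, each with algebraic multiplicity 2; moreover
`A` is not diagonalizable over `ℂ` at these parameter values. -/
theorem Am_EP :
    (Am 2 (2 * Real.sqrt 3) 1).charpoly = (X ^ 2 + C 2) ^ 2 ∧
    spectrum ℂ (Am 2 (2 * Real.sqrt 3) 1)
      = {Complex.I * (Real.sqrt 2 : ℂ), -(Complex.I * (Real.sqrt 2 : ℂ))} ∧
    ¬∃ Q : Matrix (Fin 4) (Fin 4) ℂ, IsUnit Q ∧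
      ∃ d : Fin 4 → ℂ, Q⁻¹ * Am 2 (2 * Real.sqrt 3) 1 * Q = Matrix.diagonal d := by
  refine ⟨Am_charpoly', Am_spectrum, ?_⟩
  rintro ⟨Q, hQ, d, hd⟩
  set A := Am 2 (2 * Real.sqrt 3) 1 with hAdef
  have hdet : IsUnit Q.det := (Matrix.isUnit_iff_isUnit_det Q).mp hQ
  have hQQ : Q * Q⁻¹ = 1 := Matrix.mul_nonsing_inv Q hdet
  have hA : Q * Matrix.diagonal d * Q⁻¹ = A := by
    rw [← hd]
    calc Q * (Q⁻¹ * A * Q) * Q⁻¹ = Q * Q⁻¹ * A * (Q * Q⁻¹) := by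
          simp only [Matrix.mul_assoc]
      _ = A := by rw [hQQ, Matrix.one_mul, Matrix.mul_one]
  have hspec : spectrum ℂ (Matrix.diagonal d) = spectrum ℂ A := by
    calc spectrum ℂ (Matrix.diagonal d)
        = spectrum ℂ (↑hQ.unit * Matrix.diagonal d * ↑hQ.unit⁻¹) :=
          (spectrum.units_conjugate).symm
      _ = spectrum ℂ A := by rw [Matrix.coe_units_inv, hQ.unit_spec, hA]
  have hdval : ∀ i, d i ^ 2 = -2 := by
    intro i
    have hmem : d i ∈ spectrum ℂ A := by
      rw [← hspec, spectrum_diagonal]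
      exact ⟨i, rfl⟩
    rw [Am_spectrum, Set.mem_insert_iff, Set.mem_singleton_iff] at hmem
    rcases hmem with h | h <;> rw [h]
    · exact sq_I_sqrt2
    · rw [neg_pow, sq_I_sqrt2]; ring
  have hD2 : Matrix.diagonal d * Matrix.diagonal d = (-2 : ℂ) • (1 : Matrix (Fin 4) (Fin 4) ℂ) := by
    rw [Matrix.diagonal_mul_diagonal]
    ext i j
    rcases eq_or_ne i j with rfl | h
    · simp [Matrix.diagonal_apply_eq, ← sq, hdval i, Matrix.one_apply]
    · simp [Matrix.diagonal_apply_ne _ h, Matrix.one_apply_ne h]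
  have hA2 : A * A = (-2 : ℂ) • (1 : Matrix (Fin 4) (Fin 4) ℂ) := by
    calc A * A = Q * Matrix.diagonal d * Q⁻¹ * (Q * Matrix.diagonal d * Q⁻¹) := by rw [hA]
      _ = Q * (Matrix.diagonal d * ((Q⁻¹ * Q) * Matrix.diagonal d)) * Q⁻¹ := by
          simp only [Matrix.mul_assoc]
      _ = Q * (Matrix.diagonal d * Matrix.diagonal d) * Q⁻¹ := by
          rw [Matrix.nonsing_inv_mul Q hdet, Matrix.one_mul]
      _ = (-2 : ℂ) • (Q * Q⁻¹) := by rw [hD2]; simp [Matrix.mul_smul, Matrix.smul_mul]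
      _ = (-2 : ℂ) • (1 : Matrix (Fin 4) (Fin 4) ℂ) := by rw [hQQ]
  have hentry := congr_fun (congr_fun hA2 0) 2
  simp [hAdef, Am, Matrix.mul_apply, Fin.sum_univ_succ, Matrix.one_apply,
    Matrix.smul_apply] at hentry
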